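/- Let (R,‖·‖) be a normed graded ring over ℤ and (M,‖·‖_M) a normed h-graded (R,‖·‖)-module such that M ⊗ ℚ is a finitely generated R ⊗ ℚ-module and Mₙ = 0 for n < 0. Suppose there exist A, e, υ ∈ ℝ_{>0} with λ_ℚ(Rₙ,‖·‖ₙ) ≤ A nᵉ υⁿ for all n ≥ 1. Then there exists A' ∈ ℝ_{>0} with λ_ℚ(Mₙ,‖·‖_{Mₙ}) ≤ A' nᵉ υ^{n/h} for all n ≥ 1. -/

import Mathlib

open scoped TensorProduct

/-- `N` is a norm on the real vector space `V`. -/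
def IsNorm {V : Type*} [AddCommGroup V] [Module ℝ V] (N : V → ℝ) : Prop :=
  (∀ v, N v = 0 ↔ v = 0) ∧ (∀ (r : ℝ) (v : V), N (r • v) = |r| * N v) ∧
    ∀ v w, N (v + w) ≤ N v + N w

/-- `λ_ℚ(M, N)`: the infimum of all `l` such that some elements of `M` forming a
`ℚ`-basis of `M ⊗ ℚ` all have norm `≤ l`. -/
noncomputable def lambdaQ {M : Type*} [AddCommGroup M] (N : ℝ ⊗[ℤ] M → ℝ) : ℝ :=
  sInf {l | ∃ (n : ℕ) (e : Fin n → M),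
    LinearIndependent ℚ (fun i => ((1 : ℚ) ⊗ₜ[ℤ] e i : ℚ ⊗[ℤ] M)) ∧
    Submodule.span ℚ (Set.range fun i => ((1 : ℚ) ⊗ₜ[ℤ] e i : ℚ ⊗[ℤ] M)) = ⊤ ∧
    ∀ i, N ((1 : ℝ) ⊗ₜ[ℤ] e i) ≤ l}

lemma IsNorm.zero {V : Type*} [AddCommGroup V] [Module ℝ V] {N : V → ℝ} (hN : IsNorm N) :
    N 0 = 0 := (hN.1 0).2 rfl

lemma IsNorm.nonneg {V : Type*} [AddCommGroup V] [Module ℝ V] {N : V → ℝ} (hN : IsNorm N)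
    (v : V) : 0 ≤ N v := by
  have h1 : N (-v) = N v := by
    rw [show -v = (-1 : ℝ) • v by simp, hN.2.1]; simp
  have h2 := hN.2.2 v (-v)
  simp only [add_neg_cancel, hN.zero, h1] at h2
  linarith

lemma span_pure (M : Type*) [AddCommGroup M] :
    Submodule.span ℚ (Set.range fun m : M => ((1 : ℚ) ⊗ₜ[ℤ] m : ℚ ⊗[ℤ] M)) = ⊤ := by
  rw [eq_top_iff]
  rintro x -
  induction x using TensorProduct.induction_on with
  | zero => exact Submodule.zero_mem _
  | tmul q m =>
    have : (q ⊗ₜ[ℤ] m : ℚ ⊗[ℤ] M) = q • ((1 : ℚ) ⊗ₜ[ℤ] m) := by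
      rw [TensorProduct.smul_tmul', smul_eq_mul, mul_one]
    rw [this]
    exact Submodule.smul_mem _ _ (Submodule.subset_span ⟨m, rfl⟩)
  | add x y hx hy => exact Submodule.add_mem _ hx hy

lemma exists_subbasis {M : Type*} [AddCommGroup M] {ι : Type*} [Fintype ι] (x : ι → M)
    (hx : Submodule.span ℚ (Set.range fun i => ((1 : ℚ) ⊗ₜ[ℤ] x i : ℚ ⊗[ℤ] M)) = ⊤) :
    ∃ (n : ℕ) (e : Fin n → M),
      LinearIndependent ℚ (fun i => ((1 : ℚ) ⊗ₜ[ℤ] e i : ℚ ⊗[ℤ] M)) ∧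
      Submodule.span ℚ (Set.range fun i => ((1 : ℚ) ⊗ₜ[ℤ] e i : ℚ ⊗[ℤ] M)) = ⊤ ∧
      ∀ i, ∃ j, e i = x j := by
  classical
  obtain ⟨b, hbsub, hbspan, hbli⟩ :=
    exists_linearIndependent ℚ (Set.range fun i => ((1 : ℚ) ⊗ₜ[ℤ] x i : ℚ ⊗[ℤ] M))
  have hbfin : b.Finite := (Set.finite_range _).subset hbsub
  haveI : Fintype b := hbfin.fintype
  obtain ⟨q⟩ : Nonempty (Fin (Fintype.card b) ≃ b) := ⟨(Fintype.equivFin b).symm⟩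
  have hch : ∀ i : Fin (Fintype.card b), ∃ j, ((1 : ℚ) ⊗ₜ[ℤ] x j : ℚ ⊗[ℤ] M) = (q i : ℚ ⊗[ℤ] M) :=
    fun i => hbsub (q i).2
  choose j hj using hch
  refine ⟨Fintype.card b, fun i => x (j i), ?_, ?_, fun i => ⟨j i, rfl⟩⟩
  · have heq : (fun i : Fin (Fintype.card b) => ((1 : ℚ) ⊗ₜ[ℤ] x (j i) : ℚ ⊗[ℤ] M))
        = Subtype.val ∘ q := funext fun i => hj i
    rw [heq]
    exact hbli.comp q q.injective
  · have heq : Set.range (fun i : Fin (Fintype.card b) => ((1 : ℚ) ⊗ₜ[ℤ] x (j i) : ℚ ⊗[ℤ] M))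
        = b := by
      rw [show (fun i : Fin (Fintype.card b) => ((1 : ℚ) ⊗ₜ[ℤ] x (j i) : ℚ ⊗[ℤ] M))
          = Subtype.val ∘ q from funext fun i => hj i]
      rw [Set.range_comp, Equiv.range_eq_univ, Set.image_univ, Subtype.range_coe]
    rw [heq, hbspan, hx]

lemma lambdaQ_le {M : Type*} [AddCommGroup M] {N : ℝ ⊗[ℤ] M → ℝ} (hN : IsNorm N)
    {ι : Type*} [Fintype ι] (x : ι → M)
    (hx : Submodule.span ℚ (Set.range fun i => ((1 : ℚ) ⊗ₜ[ℤ] x i : ℚ ⊗[ℤ] M)) = ⊤)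
    {l : ℝ} (hl : 0 ≤ l) (hxl : ∀ i, N ((1 : ℝ) ⊗ₜ[ℤ] x i) ≤ l) :
    lambdaQ N ≤ l := by
  classical
  rcases subsingleton_or_nontrivial (ℚ ⊗[ℤ] M) with hs | hs
  · have : lambdaQ N = 0 := by
      have huniv : {l : ℝ | ∃ (n : ℕ) (e : Fin n → M),
          LinearIndependent ℚ (fun i => ((1 : ℚ) ⊗ₜ[ℤ] e i : ℚ ⊗[ℤ] M)) ∧
          Submodule.span ℚ (Set.range fun i => ((1 : ℚ) ⊗ₜ[ℤ] e i : ℚ ⊗[ℤ] M)) = ⊤ ∧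
          ∀ i, N ((1 : ℝ) ⊗ₜ[ℤ] e i) ≤ l} = Set.univ := by
        ext l'
        simp only [Set.mem_setOf_eq, Set.mem_univ, iff_true]
        exact ⟨0, Fin.elim0, linearIndependent_empty_type, Subsingleton.elim _ _,
          fun i => i.elim0⟩
      rw [lambdaQ, huniv]
      exact Real.sInf_of_not_bddBelow fun ⟨c, hc⟩ => by
        have := hc (Set.mem_univ (c - 1)); linarith
    rw [this]; exact hl
  · obtain ⟨n, e, hli, hsp, hmem⟩ := exists_subbasis x hx
    have hS : l ∈ {l : ℝ | ∃ (n : ℕ) (e : Fin n → M),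
        LinearIndependent ℚ (fun i => ((1 : ℚ) ⊗ₜ[ℤ] e i : ℚ ⊗[ℤ] M)) ∧
        Submodule.span ℚ (Set.range fun i => ((1 : ℚ) ⊗ₜ[ℤ] e i : ℚ ⊗[ℤ] M)) = ⊤ ∧
        ∀ i, N ((1 : ℝ) ⊗ₜ[ℤ] e i) ≤ l} := by
      refine ⟨n, e, hli, hsp, fun i => ?_⟩
      obtain ⟨j, hj⟩ := hmem i
      rw [hj]; exact hxl j
    refine csInf_le ⟨0, ?_⟩ hS
    rintro l' ⟨n', e', hli', hsp', hle'⟩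
    rcases Nat.eq_zero_or_pos n' with h0 | h0
    · subst h0
      exfalso
      have : Set.range (fun i : Fin 0 => ((1 : ℚ) ⊗ₜ[ℤ] e' i : ℚ ⊗[ℤ] M)) = ∅ :=
        Set.range_eq_empty _
      rw [this, Submodule.span_empty] at hsp'
      exact bot_ne_top (α := Submodule ℚ (ℚ ⊗[ℤ] M)) hsp'
    · exact le_trans (hN.nonneg _) (hle' ⟨0, h0⟩)

lemma lambdaQ_nonneg {M : Type*} [AddCommGroup M] {N : ℝ ⊗[ℤ] M → ℝ} (hN : IsNorm N) :
    0 ≤ lambdaQ N := by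
  rcases subsingleton_or_nontrivial (ℚ ⊗[ℤ] M) with hs | hs
  · refine le_of_eq ?_
    rw [lambdaQ]
    refine (Real.sInf_of_not_bddBelow fun ⟨c, hc⟩ => ?_).symm
    have : (c - 1) ∈ {l : ℝ | ∃ (n : ℕ) (e : Fin n → M),
        LinearIndependent ℚ (fun i => ((1 : ℚ) ⊗ₜ[ℤ] e i : ℚ ⊗[ℤ] M)) ∧
        Submodule.span ℚ (Set.range fun i => ((1 : ℚ) ⊗ₜ[ℤ] e i : ℚ ⊗[ℤ] M)) = ⊤ ∧
        ∀ i, N ((1 : ℝ) ⊗ₜ[ℤ] e i) ≤ l} :=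
      ⟨0, Fin.elim0, linearIndependent_empty_type, Subsingleton.elim _ _, fun i => i.elim0⟩
    have := hc this; linarith
  · apply Real.sInf_nonneg
    rintro l' ⟨n', e', hli', hsp', hle'⟩
    rcases Nat.eq_zero_or_pos n' with h0 | h0
    · subst h0
      exfalso
      have : Set.range (fun i : Fin 0 => ((1 : ℚ) ⊗ₜ[ℤ] e' i : ℚ ⊗[ℤ] M)) = ∅ :=
        Set.range_eq_empty _
      rw [this, Submodule.span_empty] at hsp'
      exact bot_ne_top (α := Submodule ℚ (ℚ ⊗[ℤ] M)) hsp'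
    · exact le_trans (hN.nonneg _) (hle' ⟨0, h0⟩)

lemma exists_basis_le {M : Type*} [AddCommGroup M] [Module.Finite ℤ M]
    {N : ℝ ⊗[ℤ] M → ℝ} (hN : IsNorm N) {c : ℝ} (hc : lambdaQ N < c) :
    ∃ (n : ℕ) (e : Fin n → M),
      LinearIndependent ℚ (fun i => ((1 : ℚ) ⊗ₜ[ℤ] e i : ℚ ⊗[ℤ] M)) ∧
      Submodule.span ℚ (Set.range fun i => ((1 : ℚ) ⊗ₜ[ℤ] e i : ℚ ⊗[ℤ] M)) = ⊤ ∧
      ∀ i, N ((1 : ℝ) ⊗ₜ[ℤ] e i) ≤ c := by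
  classical
  -- the defining set is nonempty
  obtain ⟨gn, g, hg⟩ := Module.Finite.exists_fin (R := ℤ) (M := M)
  have hgspan : Submodule.span ℚ (Set.range fun i => ((1 : ℚ) ⊗ₜ[ℤ] g i : ℚ ⊗[ℤ] M)) = ⊤ := by
    rw [eq_top_iff, ← span_pure M]
    refine Submodule.span_le.2 ?_
    rintro _ ⟨m, rfl⟩
    have hm : m ∈ Submodule.span ℤ (Set.range g) := hg ▸ Submodule.mem_top
    induction hm using Submodule.span_induction with
    | mem y hy => obtain ⟨i, rfl⟩ := hy; exact Submodule.subset_span ⟨i, rfl⟩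
    | zero =>
      show ((1 : ℚ) ⊗ₜ[ℤ] (0 : M) : ℚ ⊗[ℤ] M) ∈ _
      rw [TensorProduct.tmul_zero]; exact Submodule.zero_mem _
    | add y z _ _ hy hz =>
      show ((1 : ℚ) ⊗ₜ[ℤ] (y + z) : ℚ ⊗[ℤ] M) ∈ _
      rw [TensorProduct.tmul_add]; exact Submodule.add_mem _ hy hz
    | smul a y _ hy =>
      show ((1 : ℚ) ⊗ₜ[ℤ] (a • y) : ℚ ⊗[ℤ] M) ∈ _
      rw [TensorProduct.tmul_smul, ← Int.cast_smul_eq_zsmul ℚ]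
      exact Submodule.smul_mem _ _ hy
  obtain ⟨n0, e0, hli0, hsp0, _⟩ := exists_subbasis g hgspan
  set S := {l : ℝ | ∃ (n : ℕ) (e : Fin n → M),
      LinearIndependent ℚ (fun i => ((1 : ℚ) ⊗ₜ[ℤ] e i : ℚ ⊗[ℤ] M)) ∧
      Submodule.span ℚ (Set.range fun i => ((1 : ℚ) ⊗ₜ[ℤ] e i : ℚ ⊗[ℤ] M)) = ⊤ ∧
      ∀ i, N ((1 : ℝ) ⊗ₜ[ℤ] e i) ≤ l} with hSdef
  have hSne : S.Nonempty := by
    refine ⟨∑ i, N ((1 : ℝ) ⊗ₜ[ℤ] e0 i), n0, e0, hli0, hsp0, fun i => ?_⟩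
    exact Finset.single_le_sum (f := fun i => N ((1 : ℝ) ⊗ₜ[ℤ] e0 i))
      (fun j _ => hN.nonneg _) (Finset.mem_univ i)
  obtain ⟨a, haS, halt⟩ := Real.lt_sInf_add_pos hSne (sub_pos.2 hc)
  obtain ⟨n, e, h1, h2, h3⟩ := haS
  have : a ≤ c := by
    have : sInf S = lambdaQ N := rfl
    rw [this] at halt; linarith
  exact ⟨n, e, h1, h2, fun i => le_trans (h3 i) this⟩
def castL {M : Type*} [AddCommGroup M] (ℳ : ℤ → Submodule ℤ M) {a b : ℤ} (hab : a = b) :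
    ↥(ℳ a) →ₗ[ℤ] ↥(ℳ b) := by subst hab; exact LinearMap.id

@[simp] lemma castL_coe {M : Type*} [AddCommGroup M] (ℳ : ℤ → Submodule ℤ M) {a b : ℤ}
    (hab : a = b) (y : ↥(ℳ a)) : ((castL ℳ hab y : ↥(ℳ b)) : M) = (y : M) := by
  subst hab; rfl

lemma NM_castL {M : Type*} [AddCommGroup M] (ℳ : ℤ → Submodule ℤ M)
    (NM : ∀ n : ℤ, ℝ ⊗[ℤ] ↥(ℳ n) → ℝ) {a b : ℤ} (hab : a = b) (y : ↥(ℳ a)) :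
    NM b ((1 : ℝ) ⊗ₜ[ℤ] castL ℳ hab y) = NM a ((1 : ℝ) ⊗ₜ[ℤ] y) := by
  subst hab; rfl

def muL {A : Type*} [CommRing A] (𝒜 : ℕ → Submodule ℤ A) {M : Type*} [AddCommGroup M]
    [Module A M] (ℳ : ℤ → Submodule ℤ M) (h : ℕ)
    (hgr : ∀ (n : ℕ) (n' : ℤ) (x : A), x ∈ 𝒜 n → ∀ m : M, m ∈ ℳ n' →
      x • m ∈ ℳ ((h : ℤ) * n + n'))
    (n : ℕ) (d : ℤ) (g : ↥(ℳ d)) : ↥(𝒜 n) →ₗ[ℤ] ↥(ℳ ((h : ℤ) * n + d)) where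
  toFun := fun b => ⟨(b : A) • (g : M), hgr n d b b.2 g g.2⟩
  map_add' := fun b c => Subtype.ext (by simp [add_smul])
  map_smul' := fun z b => Subtype.ext (by simp only [SetLike.val_smul, RingHom.id_apply, smul_assoc])

set_option maxHeartbeats 2000000 in
/-- Let `(R,‖·‖)` be a normed graded ring over `ℤ` (graded pieces
`𝒜 n ⊆ A`) and `(M,‖·‖_M)` a normed `h`-graded `(R,‖·‖)`-module (an `A`-module `M`
with a `ℤ`-grading `ℳ`, vanishing in negative degrees, with `M ⊗ ℚ` finitely generated
over `A ⊗ ℚ`).  If `λ_ℚ(Rₙ) ≤ A·nᵉ·υⁿ` for all `n ≥ 1`, then there is `A' > 0` with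
`λ_ℚ(Mₙ) ≤ A'·nᵉ·υ^{n/h}` for all `n ≥ 1`. -/
theorem lambdaQ_module_estimate
    {A : Type*} [CommRing A] (𝒜 : ℕ → Submodule ℤ A) [GradedRing 𝒜]
    [∀ n, Module.Finite ℤ ↥(𝒜 n)]
    (N : ∀ n, ℝ ⊗[ℤ] ↥(𝒜 n) → ℝ) (hN : ∀ n, IsNorm (N n))
    (mulR : ∀ m n, (ℝ ⊗[ℤ] ↥(𝒜 m)) →ₗ[ℝ] (ℝ ⊗[ℤ] ↥(𝒜 n)) →ₗ[ℝ] ℝ ⊗[ℤ] ↥(𝒜 (m + n)))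
    (hmulR : ∀ m n (x : 𝒜 m) (y : 𝒜 n),
      mulR m n ((1 : ℝ) ⊗ₜ[ℤ] x) ((1 : ℝ) ⊗ₜ[ℤ] y)
        = (1 : ℝ) ⊗ₜ[ℤ] (⟨(x : A) * (y : A), SetLike.mul_mem_graded x.2 y.2⟩ : 𝒜 (m + n)))
    (hsub : ∀ m n x y, N (m + n) (mulR m n x y) ≤ N m x * N n y)
    (h : ℕ) (hh : 0 < h)
    {M : Type*} [AddCommGroup M] [Module A M]
    (ℳ : ℤ → Submodule ℤ M) [DirectSum.Decomposition ℳ]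
    [∀ n' : ℤ, Module.Finite ℤ ↥(ℳ n')]
    (hgr : ∀ (n : ℕ) (n' : ℤ) (x : A), x ∈ 𝒜 n → ∀ m : M, m ∈ ℳ n' →
      x • m ∈ ℳ ((h : ℤ) * n + n'))
    (hneg : ∀ n' : ℤ, n' < 0 → ℳ n' = ⊥)
    (hfg : ∃ s : Finset M, ∀ m : M, ∃ k : ℕ, 0 < k ∧
      (k : ℤ) • m ∈ Submodule.span A (s : Set M))
    (NM : ∀ n' : ℤ, ℝ ⊗[ℤ] ↥(ℳ n') → ℝ) (hNM : ∀ n', IsNorm (NM n'))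
    (smulR : ∀ (n : ℕ) (n' : ℤ),
      (ℝ ⊗[ℤ] ↥(𝒜 n)) →ₗ[ℝ] (ℝ ⊗[ℤ] ↥(ℳ n')) →ₗ[ℝ] ℝ ⊗[ℤ] ↥(ℳ ((h : ℤ) * n + n')))
    (hsmulR : ∀ (n : ℕ) (n' : ℤ) (x : 𝒜 n) (m : ℳ n'),
      smulR n n' ((1 : ℝ) ⊗ₜ[ℤ] x) ((1 : ℝ) ⊗ₜ[ℤ] m)
        = (1 : ℝ) ⊗ₜ[ℤ]
            (⟨(x : A) • (m : M), hgr n n' x x.2 m m.2⟩ : ℳ ((h : ℤ) * n + n')))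
    (hsubM : ∀ (n : ℕ) (n' : ℤ) (x : ℝ ⊗[ℤ] ↥(𝒜 n)) (m : ℝ ⊗[ℤ] ↥(ℳ n')),
      NM ((h : ℤ) * n + n') (smulR n n' x m) ≤ N n x * NM n' m)
    (Ac e υ : ℝ) (hAc : 0 < Ac) (he : 0 < e) (hυ : 0 < υ)
    (hbound : ∀ n : ℕ, 1 ≤ n → lambdaQ (N n) ≤ Ac * (n : ℝ) ^ e * υ ^ (n : ℝ)) :
    ∃ A' : ℝ, 0 < A' ∧ ∀ n' : ℤ, 1 ≤ n' →
      lambdaQ (NM n') ≤ A' * (n' : ℝ) ^ e * υ ^ ((n' : ℝ) / (h : ℝ)) := by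
  classical
  obtain ⟨s, hs⟩ := hfg
  set C0 : ℝ := lambdaQ (N 0) + 1 with hC0def
  have hC0pos : 0 < C0 := by
    have := lambdaQ_nonneg (hN 0); rw [hC0def]; linarith
  set B : ℕ → ℝ := fun n => if n = 0 then C0 else 2 * Ac * (n : ℝ) ^ e * υ ^ (n : ℝ)
    with hBdef
  have hBpos : ∀ n, 0 < B n := by
    intro n
    by_cases hn : n = 0
    · simpa [hBdef, hn] using hC0pos
    · simp only [hBdef, hn, if_false]; positivity
  have hlb : ∀ n, lambdaQ (N n) < B n := by
    intro n
    by_cases hn : n = 0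
    · subst hn; simp only [hBdef, if_pos rfl, hC0def]; linarith
    · simp only [hBdef, hn, if_false]
      have h1 : 1 ≤ n := Nat.one_le_iff_ne_zero.2 hn
      have h2 := hbound n h1
      have h3 : 0 < Ac * (n : ℝ) ^ e * υ ^ (n : ℝ) := by positivity
      nlinarith
  have hbasis : ∀ n, ∃ (k : ℕ) (E : Fin k → ↥(𝒜 n)),
      LinearIndependent ℚ (fun i => ((1 : ℚ) ⊗ₜ[ℤ] E i : ℚ ⊗[ℤ] ↥(𝒜 n))) ∧
      Submodule.span ℚ (Set.range fun i => ((1 : ℚ) ⊗ₜ[ℤ] E i : ℚ ⊗[ℤ] ↥(𝒜 n))) = ⊤ ∧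
      ∀ i, N n ((1 : ℝ) ⊗ₜ[ℤ] E i) ≤ B n := fun n => exists_basis_le (hN n) (hlb n)
  choose K E hEli hEsp hEle using hbasis
  set D : ℕ :=
    s.sup (fun g => (DFinsupp.support (DirectSum.decompose ℳ g)).sup fun d => d.toNat)
    with hDdef
  have hD : ∀ g ∈ s, ∀ d ∈ DFinsupp.support (DirectSum.decompose ℳ g), d ≤ (D : ℤ) := by
    intro g hg d hd
    refine le_trans (Int.self_le_toNat d) ?_
    exact_mod_cast Nat.cast_le.2 (le_trans
      (Finset.le_sup (f := fun d : ℤ => d.toNat) hd)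
      (Finset.le_sup (f := fun g =>
        (DFinsupp.support (DirectSum.decompose ℳ g)).sup fun d => d.toNat) hg))
  set G : ℝ := 1 + ∑ g ∈ s, ∑ d ∈ DFinsupp.support (DirectSum.decompose ℳ g),
      NM d ((1 : ℝ) ⊗ₜ[ℤ] (DirectSum.decompose ℳ g d)) with hGdef
  have hsum0 : 0 ≤ ∑ g ∈ s, ∑ d ∈ DFinsupp.support (DirectSum.decompose ℳ g),
      NM d ((1 : ℝ) ⊗ₜ[ℤ] (DirectSum.decompose ℳ g d)) :=
    Finset.sum_nonneg fun g _ => Finset.sum_nonneg fun d _ => (hNM d).nonneg _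
  have hG1 : 1 ≤ G := by rw [hGdef]; linarith
  have hGb : ∀ g ∈ s, ∀ d : ℤ,
      NM d ((1 : ℝ) ⊗ₜ[ℤ] (DirectSum.decompose ℳ g d)) ≤ G := by
    intro g hg d
    by_cases hd : d ∈ DFinsupp.support (DirectSum.decompose ℳ g)
    · have h1 : NM d ((1 : ℝ) ⊗ₜ[ℤ] (DirectSum.decompose ℳ g d))
          ≤ ∑ d ∈ DFinsupp.support (DirectSum.decompose ℳ g),
            NM d ((1 : ℝ) ⊗ₜ[ℤ] (DirectSum.decompose ℳ g d)) :=
        Finset.single_le_sum (f := fun d => NM d ((1 : ℝ) ⊗ₜ[ℤ] (DirectSum.decompose ℳ g d)))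
          (fun d _ => (hNM d).nonneg _) hd
      have h2 : ∑ d ∈ DFinsupp.support (DirectSum.decompose ℳ g),
            NM d ((1 : ℝ) ⊗ₜ[ℤ] (DirectSum.decompose ℳ g d))
          ≤ ∑ g ∈ s, ∑ d ∈ DFinsupp.support (DirectSum.decompose ℳ g),
            NM d ((1 : ℝ) ⊗ₜ[ℤ] (DirectSum.decompose ℳ g d)) :=
        Finset.single_le_sum (f := fun g => ∑ d ∈ DFinsupp.support (DirectSum.decompose ℳ g),
            NM d ((1 : ℝ) ⊗ₜ[ℤ] (DirectSum.decompose ℳ g d)))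
          (fun g _ => Finset.sum_nonneg fun d _ => (hNM d).nonneg _) hg
      rw [hGdef]; linarith
    · rw [DFinsupp.notMem_support_iff.1 hd, TensorProduct.tmul_zero, (hNM d).zero]
      linarith
  have hhR : (0 : ℝ) < (h : ℝ) := by exact_mod_cast hh
  have hhR1 : (1 : ℝ) ≤ (h : ℝ) := by exact_mod_cast hh
  set Cυ : ℝ := max 1 (υ ^ (-(D : ℝ) / (h : ℝ))) with hCυdef
  have hCυ1 : (1 : ℝ) ≤ Cυ := le_max_left _ _
  have hA'pos : 0 < (C0 + 2 * Ac) * G * Cυ :=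
    mul_pos (mul_pos (by linarith) (by linarith)) (by linarith)
  refine ⟨(C0 + 2 * Ac) * G * Cυ, hA'pos, ?_⟩
  intro n' hn'
  have hn'R : (1 : ℝ) ≤ (n' : ℝ) := by exact_mod_cast hn'
  have hU : 0 < υ ^ ((n' : ℝ) / (h : ℝ)) := Real.rpow_pos_of_pos hυ _
  have hP1 : 1 ≤ (n' : ℝ) ^ e := by
    calc (1 : ℝ) = 1 ^ e := (Real.one_rpow e).symm
    _ ≤ (n' : ℝ) ^ e := Real.rpow_le_rpow (by norm_num) hn'R he.le
  have hupow : ∀ n : ℕ, (n' : ℝ) - (D : ℝ) ≤ (h : ℝ) * (n : ℝ) →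
      (h : ℝ) * (n : ℝ) ≤ (n' : ℝ) →
      υ ^ ((n : ℕ) : ℝ) ≤ Cυ * υ ^ ((n' : ℝ) / (h : ℝ)) := by
    intro n h1 h2
    rcases le_or_gt 1 υ with hυ1 | hυ1
    · have hle : υ ^ ((n : ℕ) : ℝ) ≤ υ ^ ((n' : ℝ) / (h : ℝ)) := by
        refine Real.rpow_le_rpow_of_exponent_le hυ1 ?_
        rw [le_div_iff₀ hhR]; nlinarith
      exact le_trans hle (le_mul_of_one_le_left hU.le hCυ1)
    · have hle : υ ^ ((n : ℕ) : ℝ) ≤ υ ^ (((n' : ℝ) - (D : ℝ)) / (h : ℝ)) := by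
        refine Real.rpow_le_rpow_of_exponent_ge hυ hυ1.le ?_
        rw [div_le_iff₀ hhR]; nlinarith
      have heq : (((n' : ℝ) - (D : ℝ)) / (h : ℝ))
          = (n' : ℝ) / (h : ℝ) + (-(D : ℝ) / (h : ℝ)) := by ring
      rw [heq, Real.rpow_add hυ] at hle
      calc υ ^ ((n : ℕ) : ℝ) ≤ υ ^ ((n' : ℝ) / (h : ℝ)) * υ ^ (-(D : ℝ) / (h : ℝ)) := hle
      _ ≤ υ ^ ((n' : ℝ) / (h : ℝ)) * Cυ :=
        mul_le_mul_of_nonneg_left (le_max_right _ _) hU.le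
      _ = Cυ * υ ^ ((n' : ℝ) / (h : ℝ)) := mul_comm _ _
  have harith : ∀ n : ℕ, n' - (D : ℤ) ≤ (h : ℤ) * n → (h : ℤ) * n ≤ n' →
      B n * G ≤ (C0 + 2 * Ac) * G * Cυ * (n' : ℝ) ^ e * υ ^ ((n' : ℝ) / (h : ℝ)) := by
    intro n hz1 hz2
    have hr1 : (n' : ℝ) - (D : ℝ) ≤ (h : ℝ) * (n : ℝ) := by exact_mod_cast hz1
    have hr2 : (h : ℝ) * (n : ℝ) ≤ (n' : ℝ) := by exact_mod_cast hz2
    have hup := hupow n hr1 hr2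
    rcases Nat.eq_zero_or_pos n with hn0 | hn1
    · subst hn0
      have h1 : (1 : ℝ) ≤ Cυ * υ ^ ((n' : ℝ) / (h : ℝ)) := by
        rw [Nat.cast_zero, Real.rpow_zero] at hup; exact hup
      have hB0 : B 0 * G = C0 * G := by simp [hBdef]
      rw [hB0]
      have step1 : C0 * G ≤ (C0 + 2 * Ac) * G :=
        mul_le_mul_of_nonneg_right (by linarith) (by linarith)
      have step2 : (1 : ℝ) ≤ (n' : ℝ) ^ e * (Cυ * υ ^ ((n' : ℝ) / (h : ℝ))) := by
        have := mul_le_mul hP1 h1 zero_le_one (le_trans zero_le_one hP1)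
        linarith
      calc C0 * G ≤ (C0 + 2 * Ac) * G := step1
      _ ≤ ((C0 + 2 * Ac) * G) * ((n' : ℝ) ^ e * (Cυ * υ ^ ((n' : ℝ) / (h : ℝ)))) :=
        le_mul_of_one_le_right (by nlinarith) step2
      _ = (C0 + 2 * Ac) * G * Cυ * (n' : ℝ) ^ e * υ ^ ((n' : ℝ) / (h : ℝ)) := by ring
    · have hnR1 : (1 : ℝ) ≤ (n : ℝ) := by exact_mod_cast hn1
      have hnn' : (n : ℝ) ≤ (n' : ℝ) := by nlinarith
      have hne2 : (n : ℝ) ^ e ≤ (n' : ℝ) ^ e := Real.rpow_le_rpow (by positivity) hnn' he.le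
      have hBn : B n = 2 * Ac * (n : ℝ) ^ e * υ ^ ((n : ℕ) : ℝ) := by
        simp [hBdef, Nat.pos_iff_ne_zero.1 hn1]
      rw [hBn]
      have t1 : 2 * Ac * (n : ℝ) ^ e ≤ (C0 + 2 * Ac) * (n' : ℝ) ^ e :=
        mul_le_mul (by linarith) hne2 (by positivity) (by linarith)
      have t2 : υ ^ ((n : ℕ) : ℝ) * G ≤ (Cυ * υ ^ ((n' : ℝ) / (h : ℝ))) * G :=
        mul_le_mul_of_nonneg_right hup (by linarith)
      calc 2 * Ac * (n : ℝ) ^ e * υ ^ ((n : ℕ) : ℝ) * G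
          = (2 * Ac * (n : ℝ) ^ e) * (υ ^ ((n : ℕ) : ℝ) * G) := by ring
      _ ≤ ((C0 + 2 * Ac) * (n' : ℝ) ^ e) * ((Cυ * υ ^ ((n' : ℝ) / (h : ℝ))) * G) := by
        refine mul_le_mul t1 t2 ?_ ?_
        · positivity
        · nlinarith
      _ = (C0 + 2 * Ac) * G * Cυ * (n' : ℝ) ^ e * υ ^ ((n' : ℝ) / (h : ℝ)) := by ring
  have hl0 : 0 < (C0 + 2 * Ac) * G * Cυ * (n' : ℝ) ^ e * υ ^ ((n' : ℝ) / (h : ℝ)) :=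
    mul_pos (mul_pos hA'pos (by linarith)) hU
  -- the finite family
  let fam : (Σ _g : {x // x ∈ s}, Σ nn : Fin (n'.toNat + 1), Fin (K nn.1)) → ↥(ℳ n') :=
    fun p => castL ℳ (by ring)
      ((muL 𝒜 ℳ h hgr p.2.1.1 (n' - (h : ℤ) * p.2.1.1)
        (DirectSum.decompose ℳ (p.1 : M) (n' - (h : ℤ) * p.2.1.1))) (E p.2.1.1 p.2.2))
  -- the projection maps
  let Pi : M →ₗ[ℤ] ↥(ℳ n') :=
    { toFun := fun w => DirectSum.decompose ℳ w n'
      map_add' := fun x y => by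
        simp only [DirectSum.decompose_add, DirectSum.add_apply]
      map_smul' := fun z w => by
        simp only [DirectSum.decompose_smul, DirectSum.smul_apply, RingHom.id_apply] }
  let ψ : M →ₗ[ℤ] ℚ ⊗[ℤ] ↥(ℳ n') := ((TensorProduct.mk ℤ ℚ ↥(ℳ n')) 1).comp Pi
  have key : ∀ (n : ℕ) (b : ↥(𝒜 n)) (g : M),
      ∀ n'' : ℤ, ((DirectSum.decompose ℳ ((b : A) • g) n'' : ↥(ℳ n'')) : M)
        = (b : A) • ((DirectSum.decompose ℳ g (n'' - (h : ℤ) * n)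
            : ↥(ℳ (n'' - (h : ℤ) * n))) : M) := by
    intro n b g
    refine DirectSum.Decomposition.inductionOn ℳ
      (motive := fun g => ∀ n'' : ℤ, ((DirectSum.decompose ℳ ((b : A) • g) n'' : ↥(ℳ n'')) : M)
        = (b : A) • ((DirectSum.decompose ℳ g (n'' - (h : ℤ) * n)
            : ↥(ℳ (n'' - (h : ℤ) * n))) : M)) ?_ ?_ ?_ g
    · intro n''; simp
    · intro dd m n''
      by_cases hc : (h : ℤ) * n + dd = n''
      · have hmem : (b : A) • (m : M) ∈ ℳ n'' := hc ▸ hgr n dd b b.2 m m.2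
        rw [DirectSum.decompose_of_mem_same ℳ hmem]
        have hd : n'' - (h : ℤ) * n = dd := by omega
        rw [hd, DirectSum.decompose_of_mem_same ℳ m.2]
      · rw [DirectSum.decompose_of_mem_ne ℳ (hgr n dd b b.2 m m.2) hc]
        have hd : dd ≠ n'' - (h : ℤ) * n := fun hdd => hc (by omega)
        rw [DirectSum.decompose_of_mem_ne ℳ m.2 hd, smul_zero]
    · intro m1 m2 h1 h2 n''
      simp only [smul_add, DirectSum.decompose_add, DirectSum.add_apply, Submodule.coe_add,
        h1 n'', h2 n'']
  have hterm2 : ∀ g ∈ s, ∀ (n : ℕ) (b : ↥(𝒜 n)), ψ ((b : A) • g) ∈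
      Submodule.span ℚ (Set.range fun p => ((1 : ℚ) ⊗ₜ[ℤ] fam p : ℚ ⊗[ℤ] ↥(ℳ n'))) := by
    intro g hg n b
    have hψ : ψ ((b : A) • g) = (LinearMap.baseChange ℚ
        ((castL ℳ (show (h : ℤ) * n + (n' - (h : ℤ) * n) = n' by ring)).comp
          (muL 𝒜 ℳ h hgr n (n' - (h : ℤ) * n)
            (DirectSum.decompose ℳ g (n' - (h : ℤ) * n))))) ((1 : ℚ) ⊗ₜ[ℤ] b) := by
      rw [LinearMap.baseChange_tmul]
      show (1 : ℚ) ⊗ₜ[ℤ] (Pi ((b : A) • g)) = _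
      congr 1
      apply Subtype.ext
      show ((DirectSum.decompose ℳ ((b : A) • g) n' : ↥(ℳ n')) : M) = _
      rw [LinearMap.comp_apply, castL_coe]
      exact key n b g n'
    rw [hψ]
    by_cases hcase : (h : ℤ) * (n : ℤ) ≤ n'
    · have hnint : (n : ℤ) ≤ n' := by nlinarith [show (1 : ℤ) ≤ (h : ℤ) from by exact_mod_cast hh]
      have hlt : n < n'.toNat + 1 := by omega
      have hb : ((1 : ℚ) ⊗ₜ[ℤ] b : ℚ ⊗[ℤ] ↥(𝒜 n)) ∈ Submodule.span ℚ
          (Set.range fun i => ((1 : ℚ) ⊗ₜ[ℤ] E n i : ℚ ⊗[ℤ] ↥(𝒜 n))) := by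
        rw [hEsp n]; exact Submodule.mem_top
      have hmem := Submodule.apply_mem_span_image_of_mem_span (LinearMap.baseChange ℚ
        ((castL ℳ (show (h : ℤ) * n + (n' - (h : ℤ) * n) = n' by ring)).comp
          (muL 𝒜 ℳ h hgr n (n' - (h : ℤ) * n)
            (DirectSum.decompose ℳ g (n' - (h : ℤ) * n))))) hb
      rw [← Set.range_comp] at hmem
      refine Submodule.span_mono ?_ hmem
      rintro _ ⟨i, rfl⟩
      refine ⟨⟨⟨g, hg⟩, ⟨n, hlt⟩, i⟩, ?_⟩
      show (1 : ℚ) ⊗ₜ[ℤ] fam _ = _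
      rw [Function.comp_apply, LinearMap.baseChange_tmul]
      rfl
    · have hdneg : n' - (h : ℤ) * n < 0 := by omega
      have hz : (DirectSum.decompose ℳ g (n' - (h : ℤ) * n)
          : ↥(ℳ (n' - (h : ℤ) * n))) = 0 := by
        have hmm : ((DirectSum.decompose ℳ g (n' - (h : ℤ) * n)
            : ↥(ℳ (n' - (h : ℤ) * n))) : M) ∈ (⊥ : Submodule ℤ M) :=
          (le_of_eq (hneg _ hdneg)) (DirectSum.decompose ℳ g (n' - (h : ℤ) * n)).2
        exact Subtype.ext (by simpa using hmm)
      rw [LinearMap.baseChange_tmul]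
      have hz2 : ((castL ℳ (show (h : ℤ) * n + (n' - (h : ℤ) * n) = n' by ring)).comp
          (muL 𝒜 ℳ h hgr n (n' - (h : ℤ) * n)
            (DirectSum.decompose ℳ g (n' - (h : ℤ) * n)))) b = 0 := by
        apply Subtype.ext
        rw [LinearMap.comp_apply, castL_coe]
        show (b : A) • ((DirectSum.decompose ℳ g (n' - (h : ℤ) * n)
            : ↥(ℳ (n' - (h : ℤ) * n))) : M) = _
        simp only [hz, ZeroMemClass.coe_zero, smul_zero]
      rw [hz2, TensorProduct.tmul_zero]
      exact Submodule.zero_mem _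
  have hterm : ∀ g ∈ s, ∀ a : A, ψ (a • g) ∈
      Submodule.span ℚ (Set.range fun p => ((1 : ℚ) ⊗ₜ[ℤ] fam p : ℚ ⊗[ℤ] ↥(ℳ n'))) := by
    intro g hg a
    rw [← DirectSum.sum_support_decompose 𝒜 a, Finset.sum_smul, map_sum]
    exact Submodule.sum_mem _ fun n _ => hterm2 g hg n _
  have hspanP : ∀ v : ↥(ℳ n'), ((1 : ℚ) ⊗ₜ[ℤ] v : ℚ ⊗[ℤ] ↥(ℳ n')) ∈
      Submodule.span ℚ (Set.range fun p => ((1 : ℚ) ⊗ₜ[ℤ] fam p : ℚ ⊗[ℤ] ↥(ℳ n'))) := by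
    intro v
    obtain ⟨k, hk, hkv⟩ := hs (v : M)
    have h1 : Pi ((k : ℤ) • (v : M)) = (k : ℤ) • v := by
      apply Subtype.ext
      show ((DirectSum.decompose ℳ ((k : ℤ) • (v : M)) n' : ↥(ℳ n')) : M) = _
      rw [DirectSum.decompose_of_mem_same ℳ (Submodule.smul_mem _ _ v.2)]
      simp
    have hψv : ψ ((k : ℤ) • (v : M)) = (k : ℚ) • ((1 : ℚ) ⊗ₜ[ℤ] v : ℚ ⊗[ℤ] ↥(ℳ n')) := by
      show (1 : ℚ) ⊗ₜ[ℤ] (Pi ((k : ℤ) • (v : M))) = _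
      rw [h1, TensorProduct.tmul_smul, ← Int.cast_smul_eq_zsmul ℚ]
      norm_num
    have hmem : ψ ((k : ℤ) • (v : M)) ∈
        Submodule.span ℚ (Set.range fun p => ((1 : ℚ) ⊗ₜ[ℤ] fam p : ℚ ⊗[ℤ] ↥(ℳ n'))) := by
      obtain ⟨c, -, hc⟩ := Submodule.mem_span_finset.1 hkv
      rw [← hc, map_sum]
      exact Submodule.sum_mem _ fun g hg => hterm g hg (c g)
    have hk0 : ((k : ℚ)) ≠ 0 := Nat.cast_ne_zero.2 hk.ne'
    have heq : ((1 : ℚ) ⊗ₜ[ℤ] v : ℚ ⊗[ℤ] ↥(ℳ n'))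
        = (k : ℚ)⁻¹ • ψ ((k : ℤ) • (v : M)) := by
      rw [hψv, smul_smul, inv_mul_cancel₀ hk0, one_smul]
    rw [heq]
    exact Submodule.smul_mem _ _ hmem
  have hspan : Submodule.span ℚ
      (Set.range fun p => ((1 : ℚ) ⊗ₜ[ℤ] fam p : ℚ ⊗[ℤ] ↥(ℳ n'))) = ⊤ := by
    rw [eq_top_iff, ← span_pure ↥(ℳ n')]
    refine Submodule.span_le.2 ?_
    rintro _ ⟨v, rfl⟩
    exact hspanP v
  have hnorm : ∀ p, NM n' ((1 : ℝ) ⊗ₜ[ℤ] fam p)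
      ≤ (C0 + 2 * Ac) * G * Cυ * (n' : ℝ) ^ e * υ ^ ((n' : ℝ) / (h : ℝ)) := by
    rintro ⟨⟨g, hg⟩, ⟨n, hnlt⟩, i⟩
    by_cases hds : (DirectSum.decompose ℳ g (n' - (h : ℤ) * n)
        : ↥(ℳ (n' - (h : ℤ) * n))) = 0
    · have hfam0 : fam ⟨⟨g, hg⟩, ⟨n, hnlt⟩, i⟩ = 0 := by
        apply Subtype.ext
        show ((castL ℳ _ _ : ↥(ℳ n')) : M) = _
        rw [castL_coe]
        show (E n i : A) • ((DirectSum.decompose ℳ g (n' - (h : ℤ) * n)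
            : ↥(ℳ (n' - (h : ℤ) * n))) : M) = _
        simp only [hds, ZeroMemClass.coe_zero, smul_zero]
      rw [hfam0, TensorProduct.tmul_zero, (hNM n').zero]
      exact hl0.le
    · have hdmem : (n' - (h : ℤ) * n) ∈ DFinsupp.support (DirectSum.decompose ℳ g) :=
        DFinsupp.mem_support_iff.2 hds
      have hd0 : 0 ≤ n' - (h : ℤ) * n := by
        by_contra hcon
        push_neg at hcon
        apply hds
        have hmm : ((DirectSum.decompose ℳ g (n' - (h : ℤ) * n)
            : ↥(ℳ (n' - (h : ℤ) * n))) : M) ∈ (⊥ : Submodule ℤ M) :=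
          (le_of_eq (hneg _ hcon)) (DirectSum.decompose ℳ g (n' - (h : ℤ) * n)).2
        exact Subtype.ext (by simpa using hmm)
      have hdD := hD g hg _ hdmem
      have e1 : NM n' ((1 : ℝ) ⊗ₜ[ℤ] fam ⟨⟨g, hg⟩, ⟨n, hnlt⟩, i⟩)
          = NM ((h : ℤ) * n + (n' - (h : ℤ) * n)) ((1 : ℝ) ⊗ₜ[ℤ]
            ((muL 𝒜 ℳ h hgr n (n' - (h : ℤ) * n)
              (DirectSum.decompose ℳ g (n' - (h : ℤ) * n))) (E n i))) :=
        NM_castL ℳ NM _ _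
      rw [e1]
      rw [show ((1 : ℝ) ⊗ₜ[ℤ] ((muL 𝒜 ℳ h hgr n (n' - (h : ℤ) * n)
            (DirectSum.decompose ℳ g (n' - (h : ℤ) * n))) (E n i))
            : ℝ ⊗[ℤ] ↥(ℳ ((h : ℤ) * n + (n' - (h : ℤ) * n))))
          = smulR n (n' - (h : ℤ) * n) ((1 : ℝ) ⊗ₜ[ℤ] E n i)
            ((1 : ℝ) ⊗ₜ[ℤ] DirectSum.decompose ℳ g (n' - (h : ℤ) * n)) from
        (hsmulR n _ (E n i) _).symm]
      refine le_trans (hsubM n _ _ _) ?_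
      have hmul : N n ((1 : ℝ) ⊗ₜ[ℤ] E n i) * NM (n' - (h : ℤ) * n)
          ((1 : ℝ) ⊗ₜ[ℤ] DirectSum.decompose ℳ g (n' - (h : ℤ) * n)) ≤ B n * G :=
        mul_le_mul (hEle n i) (hGb g hg _) ((hNM _).nonneg _) (hBpos n).le
      exact le_trans hmul (harith n (by omega) (by omega))
  exact lambdaQ_le (hNM n') fam hspan hl0.le hnorm
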